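/- Let G be a group with trivial centre and with the unique root property. Then Aut(G) has no non-trivial finite normal subgroups; that is, every finite normal subgroup of Aut(G) is the trivial subgroup. -/

import Mathlib

/-- **Lemma.** Let `G` be a group with trivial centre and with the unique root property
(`x ^ n = y ^ n` for some `n ≥ 1` implies `x = y`). Then `Aut(G)` has no non-trivial
finite normal subgroups: every finite normal subgroup of `Aut(G)` is trivial. -/
theorem statement2 (G : Type*) [Group G]
    (hZ : Subgroup.center G = ⊥)
    (hroot : ∀ (x y : G) (n : ℕ), 1 ≤ n → x ^ n = y ^ n → x = y)
    (N : Subgroup (MulAut G)) (hN : N.Normal) (hfin : Finite N) :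
    N = ⊥ := by
  ext φ
  simp only [Subgroup.mem_bot]
  constructor
  · intro hφ
    have key : ∀ g : G, φ g = g := by
      intro g
      have hc : (MulAut.conj (φ g * g⁻¹) : MulAut G)
          = φ * MulAut.conj g * φ⁻¹ * (MulAut.conj g)⁻¹ := by
        ext a
        simp [MulAut.conj_apply, mul_assoc, map_mul, map_inv]
      have hcN : MulAut.conj (φ g * g⁻¹) ∈ N := by
        rw [hc]
        have h1 : MulAut.conj g * φ⁻¹ * (MulAut.conj g)⁻¹ ∈ N :=
          hN.conj_mem _ (N.inv_mem hφ) (MulAut.conj g)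
        have := N.mul_mem hφ h1
        simpa [mul_assoc] using this
      set x : G := φ g * g⁻¹ with hx
      set c : N := ⟨MulAut.conj x, hcN⟩ with hcdef
      have hn : 0 < orderOf c := by
        have : IsOfFinOrder c := isOfFinOrder_of_finite c
        exact this.orderOf_pos
      have hcpow : (MulAut.conj x : MulAut G) ^ orderOf c = 1 := by
        have : c ^ orderOf c = 1 := pow_orderOf_eq_one c
        have := congrArg (Subtype.val) this
        simp only [Subgroup.coe_pow, OneMemClass.coe_one] at this
        exact this
      have hxc : MulAut.conj (x ^ orderOf c) = (1 : MulAut G) := by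
        rw [map_pow]; exact hcpow
      have hcent : x ^ orderOf c ∈ Subgroup.center G := by
        rw [Subgroup.mem_center_iff]
        intro a
        have := congrArg (fun (ψ : MulAut G) => ψ a) hxc
        simp only [MulAut.conj_apply, MulAut.one_apply] at this
        calc a * x ^ orderOf c
            = (x ^ orderOf c * a * (x ^ orderOf c)⁻¹) * x ^ orderOf c := by
              rw [this]
          _ = x ^ orderOf c * a := by group
      have hx1 : x ^ orderOf c = 1 := by
        rw [hZ, Subgroup.mem_bot] at hcent
        exact hcent
      have : x = 1 := hroot x 1 (orderOf c) hn (by simpa using hx1)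
      have := this
      rw [hx] at this
      exact mul_inv_eq_one.mp this
    ext g
    simp [key g]
  · rintro rfl
    exact N.one_mem
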